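/- Let M be a first-order structure, A a parameter set, v a finite tuple from M, and H₁, H₂ ⊆ Aut_A(M) sets of automorphisms fixing A pointwise. If both orbit sets H₁·v and H₂·v are definable over v, then the set (H₁ ∘ H₂)·v = { h₁(h₂(v)) : h₁ ∈ H₁, h₂ ∈ H₂ } is definable over v. -/

import Mathlib

open FirstOrder Set

theorem definability_of_composition_orbit
    {L : FirstOrder.Language} {M : Type*} [L.Structure M]
    (A : Set M) {n : ℕ} (v : Fin n → M)
    (H₁ H₂ : Set (M ≃[L] M))
    (hH₁ : ∀ h ∈ H₁, ∀ a ∈ A, h a = a) (hH₂ : ∀ h ∈ H₂, ∀ a ∈ A, h a = a)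
    (horb₁ : (Set.range v).Definable L {w : Fin n → M | ∃ h ∈ H₁, w = fun i => h (v i)})
    (horb₂ : (Set.range v).Definable L {w : Fin n → M | ∃ h ∈ H₂, w = fun i => h (v i)}) :
    (Set.range v).Definable L
      {w : Fin n → M | ∃ h₁ ∈ H₁, ∃ h₂ ∈ H₂, w = fun i => h₁ (h₂ (v i))} := by
  classical
  -- Extract a parameter-free formula for the second orbit, with the parameters
  -- from `range v` turned into extra free variables.
  rw [Set.definable_iff_exists_formula_sum] at horb₂
  obtain ⟨φ₂, hφ₂⟩ := horb₂
  -- relabel parameters (elements of `range v`) to indices in `Fin n`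
  set r : ↑(Set.range v) ⊕ Fin n → Fin n ⊕ Fin n :=
    Sum.elim (fun a => Sum.inr a.2.choose) Sum.inl with hr
  set ψ₂ : L.Formula (Fin n ⊕ Fin n) := φ₂.relabel r with hψ₂def
  have hψ₂ : ∀ w : Fin n → M,
      ψ₂.Realize (Sum.elim w v) ↔ (∃ h ∈ H₂, w = fun i => h (v i)) := by
    intro w
    have : (Sum.elim w v) ∘ r = Sum.elim ((↑) : ↑(Set.range v) → M) w := by
      funext x
      cases x with
      | inl a => simpa [hr] using a.2.choose_spec
      | inr i => rfl
    rw [hψ₂def, Language.Formula.realize_relabel, this]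
    exact (Set.ext_iff.mp hφ₂ w).symm
  -- automorphism invariance of `ψ₂`
  have key : ∀ (h : M ≃[L] M) (w : Fin n → M),
      ψ₂.Realize (Sum.elim w (⇑h ∘ v)) ↔ ψ₂.Realize (Sum.elim (⇑h.symm ∘ w) v) := by
    intro h w
    have : Sum.elim w (⇑h ∘ v) = ⇑h ∘ Sum.elim (⇑h.symm ∘ w) v := by
      funext x
      cases x with
      | inl i => simp
      | inr i => rfl
    rw [this, Language.StrongHomClass.realize_formula]
  -- The big definable set on doubled variables
  have D₁ : (Set.range v).Definable L
      ((fun g : Fin n ⊕ Fin n → M => g ∘ Sum.inr) ⁻¹'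
        {w : Fin n → M | ∃ h ∈ H₁, w = fun i => h (v i)}) :=
    horb₁.preimage_comp Sum.inr
  have D₂ : (Set.range v).Definable L {g : Fin n ⊕ Fin n → M | ψ₂.Realize g} := by
    refine Set.Definable.mono ?_ (Set.empty_subset _)
    rw [Set.empty_definable_iff]
    exact ⟨ψ₂, rfl⟩
  have D := (D₁.inter D₂).image_comp (Sum.inl : Fin n → Fin n ⊕ Fin n)
  convert D using 1
  ext w
  simp only [Set.mem_setOf_eq, Set.mem_image, Set.mem_inter_iff, Set.mem_preimage]
  constructor
  · rintro ⟨h₁, hh₁, h₂, hh₂, rfl⟩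
    refine ⟨Sum.elim (fun i => h₁ (h₂ (v i))) (⇑h₁ ∘ v), ⟨⟨h₁, hh₁, rfl⟩, ?_⟩, ?_⟩
    · rw [key h₁]
      rw [hψ₂]
      refine ⟨h₂, hh₂, ?_⟩
      funext i
      simp
    · funext i; rfl
  · rintro ⟨g, ⟨⟨h₁, hh₁, hg⟩, hψ⟩, rfl⟩
    have hgel : g = Sum.elim (g ∘ Sum.inl) (g ∘ Sum.inr) := by
      funext x; cases x <;> rfl
    rw [hgel, hg] at hψ
    rw [show (fun i => h₁ (v i)) = ⇑h₁ ∘ v from rfl, key h₁, hψ₂] at hψ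
    obtain ⟨h₂, hh₂, hw⟩ := hψ
    refine ⟨h₁, hh₁, h₂, hh₂, ?_⟩
    funext i
    have := congrFun hw i
    simp only [Function.comp_apply] at this
    have : g (Sum.inl i) = h₁ (h₂ (v i)) := by
      have := congrArg h₁ this
      simpa using this
    exact this
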